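/- Let Y be a uniformly discrete metric space. The pairing ⟨φ, σ⟩ := Σ_{ȳ ∈ Y^{q+1}} φ(ȳ)·σ(ȳ) between a coarse q-cochain φ ∈ CX^q(Y) and a uniformly finite q-chain σ ∈ C_q^uf(Y) is a well-defined (absolutely convergent, in fact finite) bilinear pairing, and satisfies ⟨∂φ, τ⟩ = ⟨φ, ∂τ⟩ for τ ∈ C_{q+1}^uf(Y); hence it descends to a pairing HX^q(Y) × H_q^uf(Y) → ℂ. -/

import Mathlib

open Bornology

/-- A coarse `q`-cochain on the uniformly discrete metric space `Y`. -/
def IsCoarseCochain {Y : Type*} [MetricSpace Y] {q : ℕ}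
    (φ : (Fin (q + 1) → Y) → ℂ) : Prop :=
  ∀ R : ℝ, 0 < R →
    IsBounded {y : Fin (q + 1) → Y | φ y ≠ 0 ∧ ∃ x : Y, ∀ j, dist (y j) x ≤ R}

/-- A uniformly finite `q`-chain: uniformly bounded coefficients supported in a bounded
neighbourhood of the multidiagonal. -/
def IsUFChain {Y : Type*} [MetricSpace Y] {q : ℕ} (σ : (Fin (q + 1) → Y) → ℂ) : Prop :=
  (∃ K : ℝ, ∀ y, ‖σ y‖ ≤ K) ∧
  (∃ R : ℝ, ∀ y, σ y ≠ 0 → ∀ j j', dist (y j) (y j') ≤ R)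

/-- The (full alternating) Alexander–Spanier coboundary on coarse cochains. -/
noncomputable def coboundary {Y : Type*} (q : ℕ) (φ : (Fin (q + 1) → Y) → ℂ) :
    (Fin (q + 2) → Y) → ℂ :=
  fun y => ∑ i : Fin (q + 2), ((-1 : ℂ)) ^ (i : ℕ) * φ (fun j => y (i.succAbove j))

/-- The uniformly finite boundary: the coefficient of `z̄` in `∂τ` is
`∑_j (−1)ʲ ∑_{x ∈ Y} τ(z₀, …, z_{j-1}, x, z_j, …)`. -/
noncomputable def ufBoundary {Y : Type*} (q : ℕ) (τ : (Fin (q + 2) → Y) → ℂ) :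
    (Fin (q + 1) → Y) → ℂ :=
  fun z => ∑ j : Fin (q + 2), ((-1 : ℂ)) ^ (j : ℕ) * ∑ᶠ x : Y, τ (Fin.insertNth j x z)

/-- A bounded set in a finite power of a metric space with finite bounded sets is finite. -/
private lemma pi_bounded_finite {Y : Type*} [MetricSpace Y]
    (hfin : ∀ s : Set Y, IsBounded s → s.Finite) {m : ℕ}
    (s : Set (Fin m → Y)) (hs : IsBounded s) : s.Finite := by
  have hsub : s ⊆ Set.pi Set.univ (fun j => (fun y : Fin m → Y => y j) '' s) :=
    fun y hy j _ => ⟨y, hy, rfl⟩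
  refine Set.Finite.subset (Set.Finite.pi fun j => hfin _ ?_) hsub
  exact (LipschitzWith.eval j).isBounded_image hs

/-- Key change-of-variables lemma for a single face. -/
private lemma pairing_key {Y : Type*} [MetricSpace Y]
    (hfin : ∀ s : Set Y, IsBounded s → s.Finite)
    {q : ℕ} (φ : (Fin (q + 1) → Y) → ℂ) (τ : (Fin (q + 2) → Y) → ℂ)
    {R : ℝ} (hR : ∀ y, τ y ≠ 0 → ∀ j j', dist (y j) (y j') ≤ R)
    (hT : {z : Fin (q + 1) → Y | φ z ≠ 0 ∧ ∃ x, ∀ j, dist (z j) x ≤ max R 1}.Finite)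
    (i : Fin (q + 2)) :
    (Function.support fun y : Fin (q + 2) → Y =>
        φ (fun j => y (i.succAbove j)) * τ y).Finite ∧
    (Function.support fun z : Fin (q + 1) → Y =>
        φ z * ∑ᶠ x : Y, τ (i.insertNth x z)).Finite ∧
    (∑ᶠ y : Fin (q + 2) → Y, φ (fun j => y (i.succAbove j)) * τ y)
      = ∑ᶠ z : Fin (q + 1) → Y, φ z * ∑ᶠ x : Y, τ (i.insertNth x z) := by
  classical
  set T := {z : Fin (q + 1) → Y | φ z ≠ 0 ∧ ∃ x, ∀ j, dist (z j) x ≤ max R 1} with hTdef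
  -- for each z, the set of x with τ (insertNth i x z) ≠ 0 is finite
  have hXz : ∀ z : Fin (q + 1) → Y, {x : Y | τ (i.insertNth x z) ≠ 0}.Finite := by
    intro z
    refine hfin _ ((Metric.isBounded_closedBall (x := z 0) (r := R)).subset ?_)
    intro x hx
    have h := hR _ hx i (i.succAbove 0)
    rw [Fin.insertNth_apply_same, Fin.insertNth_apply_succAbove] at h
    exact Metric.mem_closedBall.2 h
  have hX : (⋃ z ∈ T, {x : Y | τ (i.insertNth x z) ≠ 0}).Finite :=
    hT.biUnion fun z _ => hXz z
  set Tf := hT.toFinset with hTf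
  set Xf := hX.toFinset with hXf
  -- support of the z-side
  have hsuppF : (Function.support fun z : Fin (q + 1) → Y =>
      φ z * ∑ᶠ x : Y, τ (i.insertNth x z)) ⊆ ↑Tf := by
    intro z hz
    have hφz : φ z ≠ 0 := left_ne_zero_of_mul hz
    have hs : (∑ᶠ x : Y, τ (i.insertNth x z)) ≠ 0 := right_ne_zero_of_mul hz
    have hex : ∃ x, τ (i.insertNth x z) ≠ 0 := by
      by_contra h
      push_neg at h
      exact hs (finsum_eq_zero_of_forall_eq_zero h)
    obtain ⟨x, hx⟩ := hex
    have hzT : z ∈ T := by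
      refine ⟨hφz, z 0, fun j => le_trans ?_ (le_max_left R 1)⟩
      have h := hR _ hx (i.succAbove j) (i.succAbove 0)
      rwa [Fin.insertNth_apply_succAbove, Fin.insertNth_apply_succAbove] at h
    simpa [hTf] using hzT
  -- support of the y-side
  have hinj : Function.Injective
      (fun p : (Fin (q + 1) → Y) × Y =>
        Fin.insertNth (α := fun _ => Y) i p.2 p.1) := by
    intro p p' h
    have h1 : p.2 = p'.2 := by
      have := congrArg (fun y => y i) h
      simpa using this
    have h2 : p.1 = p'.1 := by
      have := congrArg (Fin.removeNth i) h
      simpa using this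
    exact Prod.ext h2 h1
  have hsuppG : (Function.support fun y : Fin (q + 2) → Y =>
      φ (fun j => y (i.succAbove j)) * τ y)
      ⊆ ↑((Tf ×ˢ Xf).image (fun p : (Fin (q + 1) → Y) × Y => Fin.insertNth (α := fun _ => Y) i p.2 p.1)) := by
    intro y hy
    have hφy : φ (fun j => y (i.succAbove j)) ≠ 0 := left_ne_zero_of_mul hy
    have hτy : τ y ≠ 0 := right_ne_zero_of_mul hy
    have hyz : i.insertNth (y i) (fun j => y (i.succAbove j)) = y :=
      Fin.insertNth_self_removeNth i y
    have hzT : (fun j => y (i.succAbove j)) ∈ T :=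
      ⟨hφy, y (i.succAbove 0), fun j =>
        le_trans (hR y hτy (i.succAbove j) (i.succAbove 0)) (le_max_left R 1)⟩
    have hxX : y i ∈ ⋃ z ∈ T, {x : Y | τ (i.insertNth x z) ≠ 0} :=
      Set.mem_biUnion hzT (by rw [Set.mem_setOf_eq, hyz]; exact hτy)
    refine Finset.mem_coe.2 (Finset.mem_image.2
      ⟨((fun j => y (i.succAbove j)), y i),
        Finset.mem_product.2 ⟨hT.mem_toFinset.2 hzT, hX.mem_toFinset.2 hxX⟩, hyz⟩)
  refine ⟨((Tf ×ˢ Xf).image _).finite_toSet.subset hsuppG,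
    Tf.finite_toSet.subset hsuppF, ?_⟩
  have hRHS : (∑ᶠ z : Fin (q + 1) → Y, φ z * ∑ᶠ x : Y, τ (i.insertNth x z))
      = ∑ z ∈ Tf, ∑ x ∈ Xf, φ z * τ (i.insertNth x z) := by
    rw [finsum_eq_sum_of_support_subset _ hsuppF]
    refine Finset.sum_congr rfl fun z hz => ?_
    rw [mul_finsum _ _]
    refine finsum_eq_sum_of_support_subset _ ?_
    intro x hx
    have hx' : τ (i.insertNth x z) ≠ 0 := right_ne_zero_of_mul hx
    have hzT : z ∈ T := hT.mem_toFinset.1 hz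
    simp only [hXf, Set.Finite.coe_toFinset]
    exact Set.mem_biUnion hzT hx'
  have hLHS : (∑ᶠ y : Fin (q + 2) → Y, φ (fun j => y (i.succAbove j)) * τ y)
      = ∑ z ∈ Tf, ∑ x ∈ Xf, φ z * τ (i.insertNth x z) := by
    rw [finsum_eq_sum_of_support_subset _ hsuppG,
      Finset.sum_image (fun p _ p' _ h => hinj h), Finset.sum_product]
    refine Finset.sum_congr rfl fun z _ => Finset.sum_congr rfl fun x _ => ?_
    congr 1
    exact congrArg φ (funext fun j => Fin.insertNth_apply_succAbove i _ _ j)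
  rw [hLHS, hRHS]

/-- on a uniformly discrete metric space of bounded geometry (every
bounded set is finite), the pairing `⟨φ, σ⟩ = ∑_{ȳ} φ(ȳ)·σ(ȳ)` between coarse cochains
and uniformly finite chains has only finitely many nonzero terms (so is well defined and
bilinear) and satisfies the adjunction `⟨∂φ, τ⟩ = ⟨φ, ∂τ⟩`; hence it descends to a
pairing `HX^q(Y) × H_q^uf(Y) → ℂ`. -/
theorem coarse_uf_pairing
    {Y : Type*} [MetricSpace Y] (ε : ℝ) (hε : 0 < ε)
    (hsep : ∀ y y' : Y, y ≠ y' → ε ≤ dist y y')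
    (hfin : ∀ s : Set Y, IsBounded s → s.Finite)
    {q : ℕ} (φ : (Fin (q + 1) → Y) → ℂ) (hφ : IsCoarseCochain φ) :
    (∀ σ : (Fin (q + 1) → Y) → ℂ, IsUFChain σ →
      {y : Fin (q + 1) → Y | φ y * σ y ≠ 0}.Finite) ∧
    (∀ τ : (Fin (q + 2) → Y) → ℂ, IsUFChain τ →
      ∑ᶠ y : Fin (q + 2) → Y, coboundary q φ y * τ y
        = ∑ᶠ z : Fin (q + 1) → Y, φ z * ufBoundary q τ z) := by
  constructor
  · intro σ hσ
    obtain ⟨R, hR⟩ := hσ.2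
    have hT := pi_bounded_finite hfin _ (hφ (max R 1) (lt_max_of_lt_right one_pos))
    refine hT.subset ?_
    intro y hy
    exact ⟨left_ne_zero_of_mul hy, y 0,
      fun j => (hR y (right_ne_zero_of_mul hy) j 0).trans (le_max_left R 1)⟩
  · intro τ hτ
    obtain ⟨R, hR⟩ := hτ.2
    have hT := pi_bounded_finite hfin _ (hφ (max R 1) (lt_max_of_lt_right one_pos))
    have key := fun i : Fin (q + 2) => pairing_key hfin φ τ hR hT i
    calc ∑ᶠ y : Fin (q + 2) → Y, coboundary q φ y * τ y
        = ∑ᶠ y : Fin (q + 2) → Y, ∑ i : Fin (q + 2),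
            (-1 : ℂ) ^ (i : ℕ) * (φ (fun j => y (i.succAbove j)) * τ y) := by
          refine finsum_congr fun y => ?_
          simp only [coboundary, Finset.sum_mul, mul_assoc]
      _ = ∑ i : Fin (q + 2), ∑ᶠ y : Fin (q + 2) → Y,
            (-1 : ℂ) ^ (i : ℕ) * (φ (fun j => y (i.succAbove j)) * τ y) := by
          exact finsum_sum_comm _ _ fun i _ =>
            (key i).1.subset fun y hy => right_ne_zero_of_mul hy
      _ = ∑ i : Fin (q + 2), (-1 : ℂ) ^ (i : ℕ) *
            ∑ᶠ y : Fin (q + 2) → Y, φ (fun j => y (i.succAbove j)) * τ y := by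
          exact Finset.sum_congr rfl fun i _ => (mul_finsum _ _).symm
      _ = ∑ i : Fin (q + 2), (-1 : ℂ) ^ (i : ℕ) *
            ∑ᶠ z : Fin (q + 1) → Y, φ z * ∑ᶠ x : Y, τ (i.insertNth x z) := by
          exact Finset.sum_congr rfl fun i _ => by rw [(key i).2.2]
      _ = ∑ i : Fin (q + 2), ∑ᶠ z : Fin (q + 1) → Y,
            (-1 : ℂ) ^ (i : ℕ) * (φ z * ∑ᶠ x : Y, τ (i.insertNth x z)) := by
          exact Finset.sum_congr rfl fun i _ => mul_finsum _ _
      _ = ∑ᶠ z : Fin (q + 1) → Y, ∑ i : Fin (q + 2),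
            (-1 : ℂ) ^ (i : ℕ) * (φ z * ∑ᶠ x : Y, τ (i.insertNth x z)) := by
          exact sum_finsum_comm _ _ fun i _ =>
            (key i).2.1.subset fun z hz => right_ne_zero_of_mul hz
      _ = ∑ᶠ z : Fin (q + 1) → Y, φ z * ufBoundary q τ z := by
          refine finsum_congr fun z => ?_
          simp only [ufBoundary, Finset.mul_sum]
          exact Finset.sum_congr rfl fun i _ => by ring
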